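/- Let Z ⊆ ℝ² be a zonotope with center c and generators g₁,…,gₘ (m ≥ 1), no two of which are scalar multiples of one another, each with nonnegative second coordinate, and sorted in ascending order of angle. Let C(i,j) = 1 if j ≥ i and −1 otherwise, and define vₖ = c + Σⱼ C(k,j)gⱼ, v_{m+k} = c − Σⱼ C(k,j)gⱼ for k = 1,…,m. Then no point vₖ ∈ V = {v₁,…,v_{2m}} is a convex combination of the other points of V; i.e., each vₖ is an extreme point (vertex) of Z = co(V). -/

import Mathlib

/-- The zonotope with center `c` and generators `g`. -/
def zonotope {n : ℕ} {ι : Type} [Fintype ι] (c : EuclideanSpace ℝ (Fin n))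
    (g : ι → EuclideanSpace ℝ (Fin n)) : Set (EuclideanSpace ℝ (Fin n)) :=
  {x | ∃ β : ι → ℝ, (∀ k, β k ∈ Set.Icc (-1 : ℝ) 1) ∧ x = c + ∑ k, β k • g k}

/-- The 2m candidate vertices `vₖ = c ± Σⱼ C(k,j) gⱼ` where `C(k,j) = 1` if `j ≥ k`
and `-1` otherwise. -/
noncomputable def vtx {n m : ℕ} (c : EuclideanSpace ℝ (Fin n))
    (g : Fin m → EuclideanSpace ℝ (Fin n)) : Fin m ⊕ Fin m → EuclideanSpace ℝ (Fin n) :=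
  Sum.elim (fun k => c + ∑ j, (if k ≤ j then (1 : ℝ) else -1) • g j)
    (fun k => c - ∑ j, (if k ≤ j then (1 : ℝ) else -1) • g j)

/-- The sign vector of each candidate vertex. -/
def sgnv {m : ℕ} (k : Fin m ⊕ Fin m) (j : Fin m) : ℝ :=
  Sum.elim (fun i => if i ≤ j then (1:ℝ) else -1) (fun i => -(if i ≤ j then (1:ℝ) else -1)) k

lemma sgnv_cases {m : ℕ} (k : Fin m ⊕ Fin m) (j : Fin m) : sgnv k j = 1 ∨ sgnv k j = -1 := by
  cases k <;> simp only [sgnv, Sum.elim_inl, Sum.elim_inr] <;> split <;> simp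

lemma vtx_eq {m : ℕ} (c : EuclideanSpace ℝ (Fin 2)) (g : Fin m → EuclideanSpace ℝ (Fin 2))
    (k : Fin m ⊕ Fin m) : vtx c g k = c + ∑ j, sgnv k j • g j := by
  cases k with
  | inl i => rfl
  | inr i =>
      simp only [vtx, sgnv, Sum.elim_inr, sub_eq_add_neg, neg_smul]
      rw [← Finset.sum_neg_distrib]

/-- dot product functional on ℝ². -/
def dotf (a x : EuclideanSpace ℝ (Fin 2)) : ℝ := a 0 * x 0 + a 1 * x 1

lemma dotf_linear (a : EuclideanSpace ℝ (Fin 2)) : IsLinearMap ℝ (dotf a) :=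
  ⟨fun x y => by simp [dotf, PiLp.add_apply]; ring,
   fun c x => by simp [dotf, PiLp.smul_apply, smul_eq_mul]; ring⟩

lemma dotf_vtx {m : ℕ} (a c : EuclideanSpace ℝ (Fin 2)) (g : Fin m → EuclideanSpace ℝ (Fin 2))
    (k : Fin m ⊕ Fin m) :
    dotf a (vtx c g k) = dotf a c + ∑ j, sgnv k j * dotf a (g j) := by
  have h := dotf_linear a
  let L : EuclideanSpace ℝ (Fin 2) →ₗ[ℝ] ℝ := IsLinearMap.mk' (dotf a) h
  rw [vtx_eq]
  show L (c + ∑ j, sgnv k j • g j) = L c + ∑ j, sgnv k j * L (g j)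
  rw [map_add, map_sum]
  simp only [map_smul, smul_eq_mul]

/-- Separation lemma. -/
lemma not_mem_of_sep {m : ℕ} (hm : 1 ≤ m) (c : EuclideanSpace ℝ (Fin 2))
    (g : Fin m → EuclideanSpace ℝ (Fin 2)) (k : Fin m ⊕ Fin m)
    (a : EuclideanSpace ℝ (Fin 2)) (ha : ∀ j, 0 < sgnv k j * dotf a (g j)) :
    vtx c g k ∉ convexHull ℝ (Set.range (vtx c g) \ {vtx c g k}) := by
  have hne : (Finset.univ : Finset (Fin m)).Nonempty := ⟨⟨0, hm⟩, Finset.mem_univ _⟩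
  set μ := Finset.univ.inf' hne (fun j => sgnv k j * dotf a (g j)) with hμdef
  have hμ : 0 < μ := by
    rw [hμdef, Finset.lt_inf'_iff]
    exact fun j _ => ha j
  have hbound : ∀ k' : Fin m ⊕ Fin m, vtx c g k' ≠ vtx c g k →
      dotf a (vtx c g k') ≤ dotf a (vtx c g k) - 2 * μ := by
    intro k' hk'
    have hdiff : ∃ j0 : Fin m, sgnv k' j0 ≠ sgnv k j0 := by
      by_contra hcon
      push_neg at hcon
      apply hk'
      rw [vtx_eq, vtx_eq]
      congr 1
      exact Finset.sum_congr rfl (fun j _ => by rw [hcon j])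
    obtain ⟨j0, hj0⟩ := hdiff
    have hterm : ∀ j : Fin m, sgnv k' j * dotf a (g j) ≤ sgnv k j * dotf a (g j) := by
      intro j
      have hd := ha j
      rcases sgnv_cases k' j with h1 | h1 <;> rcases sgnv_cases k j with h2 | h2 <;>
        rw [h2] at hd <;> rw [h1, h2] <;> linarith
    have hmu0 : μ ≤ sgnv k j0 * dotf a (g j0) := Finset.inf'_le _ (Finset.mem_univ j0)
    have hj0' : sgnv k' j0 * dotf a (g j0) ≤ sgnv k j0 * dotf a (g j0) - 2 * μ := by
      have hd := ha j0
      rcases sgnv_cases k' j0 with h1 | h1 <;> rcases sgnv_cases k j0 with h2 | h2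
      · exact absurd (h1.trans h2.symm) hj0
      · rw [h2] at hd hmu0; rw [h1, h2]; linarith
      · rw [h2] at hd hmu0; rw [h1, h2]; linarith
      · exact absurd (h1.trans h2.symm) hj0
    rw [dotf_vtx, dotf_vtx]
    have hsum : ∑ j, sgnv k' j * dotf a (g j) ≤ (∑ j, sgnv k j * dotf a (g j)) - 2 * μ := by
      rw [← Finset.add_sum_erase _ (fun j => sgnv k' j * dotf a (g j)) (Finset.mem_univ j0),
          ← Finset.add_sum_erase _ (fun j => sgnv k j * dotf a (g j)) (Finset.mem_univ j0)]
      have hrest : ∑ j ∈ Finset.univ.erase j0, sgnv k' j * dotf a (g j)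
          ≤ ∑ j ∈ Finset.univ.erase j0, sgnv k j * dotf a (g j) :=
        Finset.sum_le_sum (fun j _ => hterm j)
      linarith
    linarith
  intro hmem
  have hsub : convexHull ℝ (Set.range (vtx c g) \ {vtx c g k})
      ⊆ {x | dotf a x ≤ dotf a (vtx c g k) - 2 * μ} := by
    apply convexHull_min
    · rintro x ⟨⟨k', rfl⟩, hx2⟩
      exact hbound k' (by simpa using hx2)
    · exact convex_halfSpace_le (dotf_linear a) _
  have := hsub hmem
  simp only [Set.mem_setOf_eq] at this
  linarith

/-- cross product in the plane -/
def crs (u v : EuclideanSpace ℝ (Fin 2)) : ℝ := u 0 * v 1 - u 1 * v 0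

/-- 90° rotation -/
noncomputable def rot (u : EuclideanSpace ℝ (Fin 2)) : EuclideanSpace ℝ (Fin 2) :=
  (WithLp.equiv 2 (Fin 2 → ℝ)).symm ![-(u 1), u 0]

lemma dotf_rot (u v : EuclideanSpace ℝ (Fin 2)) : dotf (rot u) v = crs u v := by
  simp only [dotf, rot, crs, WithLp.equiv_symm_apply, PiLp.toLp_apply, Matrix.cons_val_zero,
    Matrix.cons_val_one, Matrix.head_cons]
  ring

lemma crs_self (u : EuclideanSpace ℝ (Fin 2)) : crs u u = 0 := by simp [crs]; ring

lemma crs_antisymm (u v : EuclideanSpace ℝ (Fin 2)) : crs u v = -crs v u := by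
  simp [crs]; ring

lemma crs_add_left (u v w : EuclideanSpace ℝ (Fin 2)) :
    crs (u + v) w = crs u w + crs v w := by
  simp [crs, PiLp.add_apply]; ring

lemma crs_sub_left (u v w : EuclideanSpace ℝ (Fin 2)) :
    crs (u - v) w = crs u w - crs v w := by
  simp [crs, PiLp.sub_apply]; ring

lemma dotf_neg (a v : EuclideanSpace ℝ (Fin 2)) : dotf (-a) v = -dotf a v := by
  simp [dotf, PiLp.neg_apply]; ring

/-- Existence of a separating direction for each candidate vertex, assuming
nondegenerate generators. -/
lemma exists_sep {m : ℕ} (hm : 1 ≤ m) (g : Fin m → EuclideanSpace ℝ (Fin 2))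
    (hsort : ∀ i j : Fin m, i < j → 0 < g i 0 * g j 1 - g i 1 * g j 0)
    (hnz : ∀ j, g j ≠ 0) (k : Fin m ⊕ Fin m) :
    ∃ a : EuclideanSpace ℝ (Fin 2), ∀ j, 0 < sgnv k j * dotf a (g j) := by
  have hcrs : ∀ i j : Fin m, i < j → 0 < crs (g i) (g j) := hsort
  -- first handle `inl`
  have hinl : ∀ i : Fin m, ∃ a : EuclideanSpace ℝ (Fin 2),
      ∀ j, 0 < (if i ≤ j then (1:ℝ) else -1) * dotf a (g j) := by
    intro i
    by_cases h1 : m = 1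
    · -- single generator: a = g i
      refine ⟨g i, fun j => ?_⟩
      have hij : i = j := by omega
      subst hij
      simp only [le_refl, if_pos, one_mul]
      have h0 : g i 0 ≠ 0 ∨ g i 1 ≠ 0 := by
        by_contra hcon
        push_neg at hcon
        apply hnz i
        ext x
        fin_cases x
        · exact hcon.1
        · exact hcon.2
      have : 0 < g i 0 * g i 0 + g i 1 * g i 1 := by
        rcases h0 with h | h <;>
          nlinarith [mul_self_nonneg (g i 0), mul_self_nonneg (g i 1), mul_self_pos.mpr h]
      simpa [dotf] using this
    · have h2 : 2 ≤ m := by omega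
      by_cases hi0 : i.val = 0
      · -- i = 0 : direction between g (m-1) and g 0 (rotated)
        set ilast : Fin m := ⟨m - 1, by omega⟩ with hilast
        refine ⟨rot (g i - g ilast), fun j => ?_⟩
        have hij : i ≤ j := by omega
        rw [if_pos hij, one_mul, dotf_rot, crs_sub_left]
        rw [crs_antisymm (g ilast) (g j)]
        rcases eq_or_ne i j with rfl | h
        · have hB : 0 < crs (g i) (g ilast) := by
            apply hcrs
            rw [Fin.lt_def]
            simp only [hilast]
            omega
          rw [crs_self]
          linarith
        · have hA : 0 < crs (g i) (g j) := hcrs i j (lt_of_le_of_ne hij h)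
          have hB : 0 ≤ crs (g j) (g ilast) := by
            rcases eq_or_ne j ilast with hh | hh
            · rw [hh, crs_self]
            · refine le_of_lt (hcrs j ilast ?_)
              rw [Fin.lt_def]
              have : j.val ≠ m - 1 := fun hv => hh (Fin.ext (by simpa [hilast] using hv))
              simp only [hilast]
              omega
          linarith
      · -- 0 < i : direction between g (i-1) and g i (rotated)
        set iprev : Fin m := ⟨i.val - 1, by omega⟩ with hiprev
        refine ⟨rot (g iprev + g i), fun j => ?_⟩
        rw [dotf_rot, crs_add_left]
        by_cases hij : i ≤ j
        · rw [if_pos hij, one_mul]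
          have hA : 0 < crs (g iprev) (g j) := by
            apply hcrs
            rw [Fin.lt_def]
            simp only [hiprev]
            omega
          have hB : 0 ≤ crs (g i) (g j) := by
            rcases eq_or_ne i j with h | h
            · rw [h, crs_self]
            · exact le_of_lt (hcrs i j (lt_of_le_of_ne hij h))
          linarith
        · rw [if_neg hij]
          push_neg at hij
          have hB : crs (g i) (g j) < 0 := by
            rw [crs_antisymm]
            have := hcrs j i hij
            linarith
          have hA : crs (g iprev) (g j) ≤ 0 := by
            rcases eq_or_ne j iprev with hh | hh
            · rw [hh, crs_self]
            · rw [crs_antisymm]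
              have : j < iprev := by
                rw [Fin.lt_def]
                have hne : j.val ≠ i.val - 1 := fun hv => hh (Fin.ext (by simpa [hiprev] using hv))
                have := Fin.lt_def.mp hij
                simp only [hiprev]
                omega
              have := hcrs j iprev this
              linarith
          linarith
  cases k with
  | inl i =>
      obtain ⟨a, ha⟩ := hinl i
      exact ⟨a, fun j => by simpa [sgnv] using ha j⟩
  | inr i =>
      obtain ⟨a, ha⟩ := hinl i
      refine ⟨-a, fun j => ?_⟩
      have := ha j
      simp only [sgnv, Sum.elim_inr, dotf_neg, neg_mul_neg]
      exact this


/-- For a planar zonotope whose generators all have nonnegative second coordinate, are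
pairwise non-parallel, and are sorted in ascending order of angle (encoded by the cross
product `g i × g j > 0` for `i < j`), no point produced by the vertex enumeration
algorithm is a convex combination of the other points; i.e. each is a vertex of the
zonotope. -/
theorem vtx_is_extreme {m : ℕ} (hm : 1 ≤ m) (c : EuclideanSpace ℝ (Fin 2))
    (g : Fin m → EuclideanSpace ℝ (Fin 2))
    (hy : ∀ k, 0 ≤ g k 1)
    (hsort : ∀ i j : Fin m, i < j → 0 < g i 0 * g j 1 - g i 1 * g j 0) :
    ∀ k, vtx c g k ∉ convexHull ℝ (Set.range (vtx c g) \ {vtx c g k}) := by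

  intro k
  by_cases hnz : ∀ j, g j ≠ 0
  · obtain ⟨a, ha⟩ := exists_sep hm g hsort hnz k
    exact not_mem_of_sep hm c g k a ha
  · -- some generator is zero; then m = 1 and all vertices coincide with c
    push_neg at hnz
    obtain ⟨j0, hj0⟩ := hnz
    have hm1 : m = 1 := by
      by_contra hne
      have h2 : 2 ≤ m := by omega
      -- find another index
      have : ∃ j1 : Fin m, j1 ≠ j0 := by
        rcases Nat.lt_or_ge 0 j0.val with h | h
        · exact ⟨⟨0, by omega⟩, fun hh => by simp [Fin.ext_iff] at hh; omega⟩
        · exact ⟨⟨1, by omega⟩, fun hh => by simp [Fin.ext_iff] at hh; omega⟩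
      obtain ⟨j1, hj1⟩ := this
      rcases lt_or_gt_of_ne hj1 with h | h
      · have := hsort j1 j0 h
        rw [hj0] at this
        simp at this
      · have := hsort j0 j1 h
        rw [hj0] at this
        simp at this
    -- all generators are zero
    have hall : ∀ j : Fin m, g j = 0 := by
      intro j
      have : j = j0 := by omega
      rw [this, hj0]
    have hvtx : ∀ k' : Fin m ⊕ Fin m, vtx c g k' = c := by
      intro k'
      rw [vtx_eq]
      simp [hall]
    have : Set.range (vtx c g) \ {vtx c g k} = ∅ := by
      ext x
      simp only [Set.mem_diff, Set.mem_range, Set.mem_singleton_iff, Set.mem_empty_iff_false,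
        iff_false, not_and, not_not]
      rintro ⟨k', rfl⟩
      rw [hvtx k', hvtx k]
    rw [this]
    simp
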